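/- In the setting of the previous statement (P_n ∈ Λ_n with P_0, P_1 units, a ∈ pZ_p, π_{n+1/n}(P_{n+1}) = a·P_n - ν_{n-1/n}(P_{n-1})), one has λ(P_n) = q_n for all n ≥ 0, where q_0 = q_1 = 0 and q_{n+1} = p^n - p^{n-1} + q_{n-1}. -/

import Mathlib

open MonoidAlgebra Finset

/-- `G_n`: cyclic group of order `p^n`. -/
abbrev Gn (p n : ℕ) := Multiplicative (ZMod (p ^ n))

/-- `Λ_n = ℤ_p[G_n]`. -/
abbrev Lam (p : ℕ) [Fact p.Prime] (n : ℕ) := MonoidAlgebra ℤ_[p] (Gn p n)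

/-- `ξ_n`: sum of the elements of the subgroup of order `p`. -/
noncomputable def xi (p : ℕ) [Fact p.Prime] (n : ℕ) : Lam p n :=
  ∑ σ ∈ Finset.univ.filter (fun σ : Gn p n => σ ^ p = 1), MonoidAlgebra.of ℤ_[p] (Gn p n) σ

/-- The natural surjection `G_{n+1} →* G_n`. -/
noncomputable def projHom (p n : ℕ) : Gn p (n+1) →* Gn p n :=
  AddMonoidHom.toMultiplicative
    (ZMod.castHom (pow_dvd_pow p (Nat.le_succ n)) (ZMod (p^n))).toAddMonoidHom

/-- `π_{n+1/n} : Λ_{n+1} →+* Λ_n`, the induced projection of group algebras. -/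
noncomputable def piMap (p : ℕ) [Fact p.Prime] (n : ℕ) : Lam p (n+1) →+* Lam p n :=
  MonoidAlgebra.mapDomainRingHom ℤ_[p] (projHom p n)

/-- `ν_{n/n+1} : Λ_n → Λ_{n+1}`, sending `σ` to the sum of its preimages. -/
noncomputable def nuMap (p : ℕ) [Fact p.Prime] (n : ℕ) (f : Lam p n) : Lam p (n+1) :=
  ∑ τ : Gn p (n+1), MonoidAlgebra.single τ (f.coeff (projHom p n τ))

/-- Reduction mod `p`: `ℤ_p[G_n] → 𝔽_p[G_n]` (coefficientwise). -/
noncomputable def red (p : ℕ) [Fact p.Prime] (n : ℕ) (f : Lam p n) :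
    MonoidAlgebra (ZMod p) (Gn p n) :=
  MonoidAlgebra.ofCoeff (Finsupp.mapRange (PadicInt.toZMod) (map_zero _) f.coeff)

/-- The augmentation ideal `Ĩ_n` of `𝔽_p[G_n]`. -/
noncomputable def augIdeal (p : ℕ) [Fact p.Prime] (n : ℕ) :
    Ideal (MonoidAlgebra (ZMod p) (Gn p n)) :=
  RingHom.ker ((MonoidAlgebra.lift (ZMod p) (ZMod p) (Gn p n)) 1).toRingHom

/-- `q_0 = q_1 = 0`, `q_{n+2} = p^{n+1} - p^n + q_n`. -/
def qNat (p : ℕ) : ℕ → ℕ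
  | 0 => 0
  | 1 => 0
  | (n+2) => p ^ (n+1) - p ^ n + qNat p n

section Infra

open Polynomial

variable (p : ℕ) [Fact p.Prime]

abbrev Am (m : ℕ) := MonoidAlgebra (ZMod p) (Gn p m)

noncomputable def gg (m : ℕ) : Gn p m := Multiplicative.ofAdd (1 : ZMod (p^m))

noncomputable def tt (m : ℕ) : Am p m := MonoidAlgebra.of (ZMod p) (Gn p m) (gg p m) - 1

noncomputable def phi (m : ℕ) : (ZMod p)[X] →ₐ[ZMod p] Am p m := Polynomial.aeval (tt p m)

instance (m : ℕ) : NeZero (p^m) := ⟨pow_ne_zero _ (Fact.out (p := p.Prime)).ne_zero⟩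

instance (m : ℕ) : CharP (Am p m) p :=
  charP_of_injective_algebraMap' (A := Am p m) (ZMod p) p

lemma pow_gg (m : ℕ) (σ : Gn p m) : ∃ j : ℕ, (gg p m)^j = σ := by
  refine ⟨(Multiplicative.toAdd σ).val, ?_⟩
  have h : ((Multiplicative.toAdd σ).val : ZMod (p^m)) = Multiplicative.toAdd σ := by
    simp [ZMod.natCast_val, ZMod.cast_id]
  simp only [gg, ← ofAdd_nsmul, nsmul_eq_mul, mul_one, h]
  rfl

lemma gg_pow_card (m : ℕ) : (gg p m)^(p^m) = 1 := by
  simp only [gg, ← ofAdd_nsmul, nsmul_eq_mul, mul_one]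
  norm_num [ZMod.natCast_self]

lemma tpow_zero (m : ℕ) : (tt p m)^(p^m) = 0 := by
  have h1 : (MonoidAlgebra.of (ZMod p) (Gn p m) (gg p m))^(p^m) = 1 := by
    rw [← map_pow, gg_pow_card, map_one]
  rw [tt, sub_pow_char_pow, h1, one_pow, sub_self]

lemma phi_surjective (m : ℕ) : Function.Surjective (phi p m) := by
  intro x
  have : x ∈ (phi p m).range := by
    induction x using MonoidAlgebra.induction_on with
    | of σ =>
        obtain ⟨j, hj⟩ := pow_gg p m σ
        refine ⟨(1 + X)^j, ?_⟩
        rw [map_pow, ← hj, map_pow]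
        congr 1
        simp [phi, tt]
    | add f g hf hg => exact add_mem hf hg
    | smul r f hf => exact Subalgebra.smul_mem _ hf r
  exact this

noncomputable instance (m : ℕ) : Module (ZMod p) (Am p m) := inferInstance

lemma finrank_Am (m : ℕ) : Module.finrank (ZMod p) (Am p m) = p^m := by
  have b : Module.Basis (Gn p m) (ZMod p) (Am p m) := MonoidAlgebra.basis (Gn p m) (ZMod p)
  rw [Module.finrank_eq_card_basis b]
  simp [ZMod.card]

noncomputable abbrev Bq (m : ℕ) : Type := AdjoinRoot ((X : (ZMod p)[X])^(p^m))

noncomputable def psi (m : ℕ) : Bq p m →ₐ[ZMod p] Am p m :=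
  AdjoinRoot.liftAlgHom _ (Algebra.ofId (ZMod p) (Am p m)) (tt p m)
    (by show Polynomial.aeval (tt p m) _ = 0; rw [map_pow, Polynomial.aeval_X, tpow_zero])

lemma psi_mk (m : ℕ) (f : (ZMod p)[X]) :
    psi p m (AdjoinRoot.mk _ f) = phi p m f := by
  exact AdjoinRoot.liftAlgHom_mk _ _ (tt p m) _ _

lemma psi_surjective (m : ℕ) : Function.Surjective (psi p m) := by
  intro x
  obtain ⟨f, hf⟩ := phi_surjective p m x
  exact ⟨AdjoinRoot.mk _ f, by rw [psi_mk, hf]⟩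

noncomputable instance (m : ℕ) : Module.Finite (ZMod p) (Bq p m) :=
  (AdjoinRoot.powerBasis (f := (X : (ZMod p)[X])^(p^m))
    (pow_ne_zero _ Polynomial.X_ne_zero)).finite

lemma finrank_Bq (m : ℕ) : Module.finrank (ZMod p) (Bq p m) = p^m := by
  rw [(AdjoinRoot.powerBasis (f := (X : (ZMod p)[X])^(p^m))
    (pow_ne_zero _ Polynomial.X_ne_zero)).finrank]
  simp [AdjoinRoot.powerBasis]

noncomputable instance (m : ℕ) : Module.Finite (ZMod p) (Am p m) :=
  Module.Finite.of_basis (MonoidAlgebra.basis (Gn p m) (ZMod p))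

lemma psi_injective (m : ℕ) : Function.Injective (psi p m) := by
  have h := (LinearMap.injective_iff_surjective_of_finrank_eq_finrank
    (f := (psi p m).toLinearMap) (by rw [finrank_Bq, finrank_Am]))
  exact h.2 (psi_surjective p m)

lemma ker_phi {m : ℕ} {f : (ZMod p)[X]} (hf : phi p m f = 0) : X^(p^m) ∣ f := by
  rw [← AdjoinRoot.mk_eq_zero]
  apply psi_injective p m
  rw [psi_mk, hf, map_zero]

noncomputable def eps (m : ℕ) : Am p m →ₐ[ZMod p] ZMod p :=
  (MonoidAlgebra.lift (ZMod p) (ZMod p) (Gn p m)) 1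

lemma eps_of (m : ℕ) (σ : Gn p m) :
    eps p m (MonoidAlgebra.of (ZMod p) (Gn p m) σ) = 1 := by
  rw [eps, MonoidAlgebra.lift_of]; rfl

lemma eps_tt (m : ℕ) : eps p m (tt p m) = 0 := by
  rw [tt, map_sub, eps_of, map_one, sub_self]

lemma eps_phi (m : ℕ) (f : (ZMod p)[X]) : eps p m (phi p m f) = f.coeff 0 := by
  have := Polynomial.aeval_algHom_apply (eps p m) (tt p m) f
  rw [eps_tt] at this
  rw [phi, ← this, Polynomial.coeff_zero_eq_aeval_zero]

lemma ker_eps_eq_span (m : ℕ) :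
    RingHom.ker (eps p m).toRingHom = Ideal.span {tt p m} := by
  apply le_antisymm
  · intro x hx
    obtain ⟨f, rfl⟩ := phi_surjective p m x
    rw [RingHom.mem_ker] at hx
    have h0 : f.coeff 0 = 0 := by rw [← eps_phi p m f]; exact hx
    obtain ⟨g, rfl⟩ := Polynomial.X_dvd_iff.2 h0
    rw [map_mul, Ideal.mem_span_singleton]
    have hX : phi p m X = tt p m := by rw [phi, Polynomial.aeval_X]
    rw [hX]
    exact dvd_mul_right _ _
  · rw [Ideal.span_le, Set.singleton_subset_iff]
    simpa [RingHom.mem_ker] using eps_tt p m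

lemma span_tt_pow (m k : ℕ) :
    (Ideal.span {tt p m})^k = Ideal.span {(tt p m)^k} :=
  (Ideal.span_singleton_pow _ _)

-- key faithfulness lemma
lemma units_step {m a : ℕ} (ha : a < p^m) {u : Am p m}
    (h : (tt p m)^a * u ∈ Ideal.span {(tt p m)^(a+1)}) :
    u ∈ Ideal.span {tt p m} := by
  rw [Ideal.mem_span_singleton] at h ⊢
  obtain ⟨z, hz⟩ := h
  obtain ⟨hpoly, rfl⟩ := phi_surjective p m u
  obtain ⟨w, rfl⟩ := phi_surjective p m z
  have key : phi p m (X^a * hpoly - X^(a+1) * w) = 0 := by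
    rw [map_sub, map_mul, map_mul, map_pow, map_pow, phi, Polynomial.aeval_X, ← phi]
    rw [sub_eq_zero, ← hz]
  have hdvd : (X : (ZMod p)[X])^(p^m) ∣ X^a * (hpoly - X * w) := by
    obtain ⟨v, hv⟩ := ker_phi p key
    exact ⟨v, by rw [← hv]; ring⟩
  obtain ⟨v, hv⟩ := hdvd
  have hXa : (X : (ZMod p)[X])^a ≠ 0 := pow_ne_zero _ Polynomial.X_ne_zero
  have : hpoly - X * w = X^(p^m - a) * v := by
    apply mul_left_cancel₀ hXa
    rw [hv, ← mul_assoc, ← pow_add]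
    congr 2
    omega
  have hXdvd : (X : (ZMod p)[X]) ∣ hpoly := by
    have h1 : hpoly = X^(p^m - a) * v + X * w := by rw [← this]; ring
    rw [h1]
    refine dvd_add (Dvd.dvd.mul_right ?_ _) (Dvd.intro _ rfl)
    exact dvd_pow_self _ (by omega)
  obtain ⟨h', rfl⟩ := hXdvd
  exact ⟨phi p m h', by rw [map_mul, phi, Polynomial.aeval_X, ← phi]⟩

noncomputable def pibar (m : ℕ) : Am p (m+1) →+* Am p m :=
  MonoidAlgebra.mapDomainRingHom (ZMod p) (projHom p m)

lemma pibar_single (m : ℕ) (σ : Gn p (m+1)) (c : ZMod p) :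
    pibar p m (MonoidAlgebra.single σ c) = MonoidAlgebra.single (projHom p m σ) c := by
  simp [pibar, MonoidAlgebra.mapDomainRingHom, Finsupp.mapDomain_single]

lemma projHom_gg (m : ℕ) : projHom p m (gg p (m+1)) = gg p m := by
  have h : (ZMod.castHom (pow_dvd_pow p (Nat.le_succ m)) (ZMod (p^m)))
      (1 : ZMod (p^(m+1))) = 1 := map_one _
  show Multiplicative.ofAdd ((ZMod.castHom (pow_dvd_pow p (Nat.le_succ m)) (ZMod (p^m)))
      (1 : ZMod (p^(m+1)))) = _
  rw [h]
  rfl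

lemma pibar_tt (m : ℕ) : pibar p m (tt p (m+1)) = tt p m := by
  rw [tt, map_sub]
  have h1 : pibar p m 1 = 1 := map_one _
  rw [h1]
  congr 1
  show pibar p m (MonoidAlgebra.single (gg p (m+1)) 1) = _
  rw [pibar_single, projHom_gg]
  rfl

lemma pibar_algebraMap (m : ℕ) (c : ZMod p) :
    pibar p m (algebraMap (ZMod p) (Am p (m+1)) c) = algebraMap (ZMod p) (Am p m) c := by
  rw [MonoidAlgebra.coe_algebraMap, MonoidAlgebra.coe_algebraMap]
  show pibar p m (MonoidAlgebra.single 1 c) = MonoidAlgebra.single 1 c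
  rw [pibar_single, map_one]

lemma pibar_phi (m : ℕ) (f : (ZMod p)[X]) :
    pibar p m (phi p (m+1) f) = phi p m f := by
  rw [phi, phi, Polynomial.aeval_def, Polynomial.aeval_def,
    Polynomial.hom_eval₂, ← pibar_tt p m]
  congr 1
  exact RingHom.ext fun c => pibar_algebraMap p m c

lemma pibar_surjective (m : ℕ) : Function.Surjective (pibar p m) := by
  intro y
  obtain ⟨f, rfl⟩ := phi_surjective p m y
  exact ⟨phi p (m+1) f, pibar_phi p m f⟩

lemma ker_pibar (m : ℕ) {x : Am p (m+1)} (hx : pibar p m x = 0) :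
    x ∈ Ideal.span {(tt p (m+1))^(p^m)} := by
  obtain ⟨f, rfl⟩ := phi_surjective p (m+1) x
  rw [pibar_phi] at hx
  obtain ⟨g, rfl⟩ := ker_phi p hx
  rw [Ideal.mem_span_singleton, map_mul, map_pow]
  have hX : phi p (m+1) X = tt p (m+1) := by rw [phi, Polynomial.aeval_X]
  rw [hX]
  exact dvd_mul_right _ _

noncomputable def redHom (n : ℕ) : Lam p n →+* Am p n :=
  MonoidAlgebra.liftNCRingHom
    ((MonoidAlgebra.singleOneRingHom : ZMod p →+* Am p n).comp
      (PadicInt.toZMod : ℤ_[p] →+* ZMod p))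
    (MonoidAlgebra.of (ZMod p) (Gn p n)) (fun _ _ => Commute.all _ _)

lemma red_apply (n : ℕ) (f : Lam p n) (τ : Gn p n) :
    (red p n f).coeff τ = PadicInt.toZMod (f.coeff τ) := rfl

lemma red_eq_redHom (n : ℕ) (f : Lam p n) : red p n f = redHom p n f := by
  induction f using MonoidAlgebra.induction_linear with
  | zero => simp [red, redHom]
  | add f g hf hg =>
      show red p n (f + g) = redHom p n (f + g)
      have : red p n (f + g) = red p n f + red p n g := by
        simp [red, Finsupp.mapRange_add, MonoidAlgebra.coeff_add, ← MonoidAlgebra.ofCoeff_add]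
      rw [this, map_add, hf, hg]
  | single σ c =>
      show red p n (MonoidAlgebra.single σ c) = redHom p n (MonoidAlgebra.single σ c)
      have h1 : red p n (MonoidAlgebra.single σ c)
          = MonoidAlgebra.single σ (PadicInt.toZMod c) := by
        simp [red, Finsupp.mapRange_single, MonoidAlgebra.coeff_single, MonoidAlgebra.ofCoeff_single]
      rw [h1, redHom, MonoidAlgebra.liftNCRingHom]
      show _ = MonoidAlgebra.liftNC _ _ (MonoidAlgebra.single σ c)
      rw [MonoidAlgebra.liftNC_single]
      show _ = (MonoidAlgebra.single 1 (PadicInt.toZMod c)) * (MonoidAlgebra.single σ 1)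
      rw [MonoidAlgebra.single_mul_single, one_mul, mul_one]

lemma red_add (n : ℕ) (f g : Lam p n) : red p n (f + g) = red p n f + red p n g := by
  rw [red_eq_redHom, red_eq_redHom, red_eq_redHom, map_add]

lemma red_sub (n : ℕ) (f g : Lam p n) : red p n (f - g) = red p n f - red p n g := by
  rw [red_eq_redHom, red_eq_redHom, red_eq_redHom, map_sub]

lemma red_isUnit {n : ℕ} {f : Lam p n} (hf : IsUnit f) : IsUnit (red p n f) := by
  rw [red_eq_redHom]; exact hf.map _

lemma red_smul_p {n : ℕ} {a : ℤ_[p]} (ha : (p : ℤ_[p]) ∣ a) (f : Lam p n) :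
    red p n (a • f) = 0 := by
  obtain ⟨b, rfl⟩ := ha
  ext τ
  show PadicInt.toZMod (((p : ℤ_[p]) * b) • f.coeff τ) = 0
  rw [smul_eq_mul, map_mul, map_mul]
  have : (PadicInt.toZMod (p : ℤ_[p]) : ZMod p) = 0 := by
    rw [map_natCast, ZMod.natCast_self]
  rw [this, zero_mul, zero_mul]

lemma red_piMap (n : ℕ) (f : Lam p (n+1)) :
    red p n (piMap p n f) = pibar p n (red p (n+1) f) := by
  induction f using MonoidAlgebra.induction_linear with
  | zero => simp [red, piMap, pibar]
  | add f g hf hg =>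
      have h1 : piMap p n (f + g) = piMap p n f + piMap p n g := map_add _ _ _
      have h2 : red p (n+1) (f+g) = red p (n+1) f + red p (n+1) g := by
        simp [red, Finsupp.mapRange_add, MonoidAlgebra.coeff_add, ← MonoidAlgebra.ofCoeff_add]
      rw [h1, red_add, hf, hg, h2, map_add]
  | single σ c =>
      have h1 : piMap p n (MonoidAlgebra.single σ c)
          = MonoidAlgebra.single (projHom p n σ) c := by
        simp [piMap, MonoidAlgebra.mapDomainRingHom, MonoidAlgebra.mapDomain_single]
      have h2 : red p n (MonoidAlgebra.single (projHom p n σ) c)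
          = MonoidAlgebra.single (projHom p n σ) (PadicInt.toZMod c) := by
        simp [red, Finsupp.mapRange_single, MonoidAlgebra.coeff_single, MonoidAlgebra.ofCoeff_single]
      have h3 : red p (n+1) (MonoidAlgebra.single σ c)
          = MonoidAlgebra.single σ (PadicInt.toZMod c) := by
        simp [red, Finsupp.mapRange_single, MonoidAlgebra.coeff_single, MonoidAlgebra.ofCoeff_single]
      rw [h1, h2, h3, pibar_single]

lemma nuMap_apply (n : ℕ) (f : Lam p n) (τ : Gn p (n+1)) :
    (nuMap p n f).coeff τ = f.coeff (projHom p n τ) := by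
  rw [nuMap, MonoidAlgebra.coeff_sum, Finset.sum_apply']
  rw [Finset.sum_eq_single τ]
  · simp [MonoidAlgebra.coeff_single]
  · intro b _ hb
    simp [MonoidAlgebra.coeff_single, Finsupp.single_apply, hb]
  · intro h
    exact absurd (Finset.mem_univ τ) h

noncomputable def nubar (n : ℕ) (g : Am p n) : Am p (n+1) :=
  ∑ τ : Gn p (n+1), MonoidAlgebra.single τ (g.coeff (projHom p n τ))

lemma nubar_apply (n : ℕ) (g : Am p n) (τ : Gn p (n+1)) :
    (nubar p n g).coeff τ = g.coeff (projHom p n τ) := by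
  rw [nubar, MonoidAlgebra.coeff_sum, Finset.sum_apply']
  rw [Finset.sum_eq_single τ]
  · simp [MonoidAlgebra.coeff_single]
  · intro b _ hb
    simp [MonoidAlgebra.coeff_single, Finsupp.single_apply, hb]
  · intro h
    exact absurd (Finset.mem_univ τ) h

lemma red_nuMap (n : ℕ) (f : Lam p n) :
    red p (n+1) (nuMap p n f) = nubar p n (red p n f) := by
  ext τ
  rw [red_apply, nuMap_apply, nubar_apply, red_apply]

lemma val_dvd_iff_proj (n : ℕ) (σ : Gn p (n+1)) :
    projHom p n σ = 1 ↔ p^n ∣ (Multiplicative.toAdd σ).val := by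
  have : projHom p n σ = Multiplicative.ofAdd
      ((ZMod.castHom (pow_dvd_pow p (Nat.le_succ n)) (ZMod (p^n))) (Multiplicative.toAdd σ)) := rfl
  rw [this]
  rw [show (1 : Gn p n) = Multiplicative.ofAdd (0 : ZMod (p^n)) from rfl]
  rw [Equiv.apply_eq_iff_eq Multiplicative.ofAdd]
  rw [ZMod.castHom_apply]
  rw [← ZMod.natCast_val]
  rw [ZMod.natCast_eq_zero_iff]

lemma pow_p_eq_one_iff (n : ℕ) (σ : Gn p (n+1)) :
    σ ^ p = 1 ↔ p^n ∣ (Multiplicative.toAdd σ).val := by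
  have h1 : σ ^ p = Multiplicative.ofAdd ((p : ℕ) • Multiplicative.toAdd σ) := by
    rw [← ofAdd_toAdd (σ^p), toAdd_pow]
  rw [h1, show (1 : Gn p (n+1)) = Multiplicative.ofAdd (0 : ZMod (p^(n+1))) from rfl,
    Equiv.apply_eq_iff_eq Multiplicative.ofAdd]
  rw [nsmul_eq_mul]
  set c := Multiplicative.toAdd σ
  have h2 : (p : ZMod (p^(n+1))) * c = ((p * c.val : ℕ) : ZMod (p^(n+1))) := by
    push_cast
    rw [ZMod.natCast_val, ZMod.cast_id]
  rw [h2, ZMod.natCast_eq_zero_iff]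
  have hp0 : 0 < p := (Fact.out (p := p.Prime)).pos
  constructor
  · rintro ⟨k, hk⟩
    refine ⟨k, Nat.eq_of_mul_eq_mul_left hp0 ?_⟩
    rw [hk]; ring
  · rintro ⟨k, hk⟩
    refine ⟨k, ?_⟩
    rw [hk]; ring

lemma gg_pow (m j : ℕ) : (gg p m)^j = Multiplicative.ofAdd ((j : ZMod (p^m))) := by
  rw [← ofAdd_toAdd ((gg p m)^j), toAdd_pow]
  congr 1
  show j • (1 : ZMod (p^m)) = (j : ZMod (p^m))
  rw [nsmul_eq_mul, mul_one]

lemma S_eq_image (n : ℕ) :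
    Finset.univ.filter (fun σ : Gn p (n+1) => σ^p = 1)
      = (Finset.range p).image (fun i => (gg p (n+1))^(p^n * i)) := by
  ext σ
  simp only [Finset.mem_filter, Finset.mem_univ, true_and, Finset.mem_image, Finset.mem_range]
  constructor
  · intro h
    have hdvd : p^n ∣ (Multiplicative.toAdd σ).val := (pow_p_eq_one_iff p n σ).1 h
    refine ⟨(Multiplicative.toAdd σ).val / p^n, ?_, ?_⟩
    · have hlt : (Multiplicative.toAdd σ).val < p^(n+1) := ZMod.val_lt _
      rw [Nat.div_lt_iff_lt_mul (Nat.pow_pos (n := n) (Fact.out (p := p.Prime)).pos)]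
      calc (Multiplicative.toAdd σ).val < p^(n+1) := hlt
        _ = p * p^n := pow_succ' p n
    · rw [Nat.mul_div_cancel' hdvd, gg_pow, ZMod.natCast_val, ZMod.cast_id]
      exact ofAdd_toAdd σ
  · rintro ⟨i, hi, rfl⟩
    rw [← pow_mul]
    have : p^n * i * p = p^(n+1) * i := by ring
    rw [this, pow_mul, gg_pow_card, one_pow]

lemma S_inj (n : ℕ) : Set.InjOn (fun i => (gg p (n+1))^(p^n * i)) (Finset.range p) := by
  intro i hi j hj hij
  simp only [Finset.coe_range, Set.mem_Iio] at hi hj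
  simp only [gg_pow] at hij
  have h2 := congrArg Multiplicative.toAdd hij
  simp only [toAdd_ofAdd] at h2
  have h3 := congrArg ZMod.val h2
  have hlt : ∀ k, k < p → p^n * k < p^(n+1) := by
    intro k hk
    calc p^n * k < p^n * p :=
          Nat.mul_lt_mul_left (Nat.pow_pos (n := n) (Fact.out (p := p.Prime)).pos) |>.mpr hk
      _ = p^(n+1) := (pow_succ p n).symm
  rw [ZMod.val_natCast_of_lt (hlt i hi), ZMod.val_natCast_of_lt (hlt j hj)] at h3
  exact Nat.eq_of_mul_eq_mul_left (Nat.pow_pos (n := n) (Fact.out (p := p.Prime)).pos) h3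

noncomputable def Sbar (n : ℕ) : Am p (n+1) :=
  ∑ σ ∈ Finset.univ.filter (fun σ : Gn p (n+1) => σ^p = 1), MonoidAlgebra.single σ (1 : ZMod p)

lemma geom_poly : ∑ i ∈ Finset.range p, (X : (ZMod p)[X])^i = (X - 1)^(p-1) := by
  have hc : (X - 1 : (ZMod p)[X]) ≠ 0 := by
    rw [← Polynomial.C_1]
    exact Polynomial.X_sub_C_ne_zero 1
  apply mul_right_cancel₀ hc
  rw [geom_sum_mul]
  have h1 : (X - 1 : (ZMod p)[X])^(p-1) * (X - 1) = (X-1)^(p-1+1) := (pow_succ _ _).symm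
  have h2 : p - 1 + 1 = p := Nat.succ_pred_eq_of_pos (Fact.out (p := p.Prime)).pos
  rw [h1, h2, sub_pow_char, one_pow]

lemma Sbar_eq (n : ℕ) : Sbar p n = (tt p (n+1))^(p^(n+1) - p^n) := by
  rw [Sbar, S_eq_image, Finset.sum_image (fun i hi j hj h => S_inj p n hi hj h)]
  have h1 : ∀ i, MonoidAlgebra.single ((gg p (n+1))^(p^n * i)) (1 : ZMod p)
      = (1 + (tt p (n+1))^(p^n))^i := by
    intro i
    have : MonoidAlgebra.single ((gg p (n+1))^(p^n * i)) (1 : ZMod p)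
        = (MonoidAlgebra.of (ZMod p) (Gn p (n+1)) (gg p (n+1)))^(p^n * i) := by
      rw [← map_pow]
      rfl
    rw [this]
    have hof : MonoidAlgebra.of (ZMod p) (Gn p (n+1)) (gg p (n+1)) = 1 + tt p (n+1) := by
      rw [tt]; ring
    rw [hof, pow_mul, add_pow_char_pow, one_pow]
  simp_rw [h1]
  have h2 : ∑ i ∈ Finset.range p, (1 + (tt p (n+1))^(p^n))^i
      = ((tt p (n+1))^(p^n))^(p-1) := by
    have := congrArg (Polynomial.aeval (1 + (tt p (n+1))^(p^n))) (geom_poly p)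
    rw [map_sum] at this
    simp only [map_pow, Polynomial.aeval_X, map_sub, map_one] at this
    rw [this]
    congr 1
    ring
  rw [h2, ← pow_mul]
  congr 1
  have h3 : p^(n+1) = p^n * (p-1) + p^n := by
    have : p^(n+1) = p^n * p := pow_succ p n
    have hp1 : 1 ≤ p := (Fact.out (p := p.Prime)).pos
    calc p^(n+1) = p^n * p := pow_succ p n
      _ = p^n * ((p-1) + 1) := by congr 1; omega
      _ = p^n * (p-1) + p^n := by ring
  omega

lemma pibar_mapDomain (n : ℕ) (F : Am p (n+1)) :
    pibar p n F = MonoidAlgebra.mapDomain (projHom p n) F := rfl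

lemma pibar_apply (n : ℕ) (F : Am p (n+1)) (y : Gn p n) :
    (pibar p n F).coeff y = ∑ x : Gn p (n+1), if projHom p n x = y then F.coeff x else 0 := by
  rw [pibar_mapDomain, MonoidAlgebra.coeff_mapDomain, Finsupp.mapDomain]
  rw [Finsupp.sum_fintype _ _ (fun _ => Finsupp.single_zero _)]
  rw [Finset.sum_apply']
  exact Finset.sum_congr rfl fun x _ => Finsupp.single_apply

lemma nubar_eq_mul (n : ℕ) (F : Am p (n+1)) :
    nubar p n (pibar p n F) = Sbar p n * F := by
  ext τ
  rw [nubar_apply, pibar_apply]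
  have hRHS : (Sbar p n * F).coeff τ
      = ∑ σ : Gn p (n+1), if σ^p = 1 then F.coeff (σ⁻¹ * τ) else 0 := by
    rw [Sbar, Finset.sum_mul, MonoidAlgebra.coeff_sum, Finset.sum_apply']
    rw [Finset.sum_filter]
    refine Finset.sum_congr rfl fun σ _ => ?_
    split_ifs with h
    · rw [MonoidAlgebra.coeff_single_mul_apply, one_mul]
    · rfl
  rw [hRHS]
  have hinv : ∀ σ : Gn p (n+1), (σ⁻¹ * τ)⁻¹ * τ = σ := fun σ => by
    rw [mul_inv_rev, inv_inv, mul_comm τ⁻¹ σ, inv_mul_cancel_right]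
  let e : Gn p (n+1) ≃ Gn p (n+1) :=
    ⟨fun σ => σ⁻¹ * τ, fun σ => σ⁻¹ * τ, hinv, hinv⟩
  rw [← Equiv.sum_comp e (fun x => if projHom p n x = projHom p n τ then F.coeff x else 0)]
  refine Finset.sum_congr rfl fun σ _ => ?_
  have he : e σ = σ⁻¹ * τ := rfl
  rw [he]
  have hcond : (projHom p n (σ⁻¹ * τ) = projHom p n τ) ↔ σ^p = 1 := by
    rw [map_mul, map_inv, mul_eq_right, inv_eq_one, val_dvd_iff_proj, pow_p_eq_one_iff]
  split_ifs with h1 h2 h2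
  · rfl
  · exact absurd (hcond.1 h1) h2
  · exact absurd (hcond.2 h2) h1
  · rfl

lemma base_unit {m : ℕ} {x : Lam p m} (hx : IsUnit x) :
    red p m x ∈ Ideal.span {(tt p m)^(0:ℕ)} ∧ red p m x ∉ Ideal.span {(tt p m)^(0+1:ℕ)} := by
  constructor
  · rw [pow_zero, Ideal.span_singleton_one]
    exact Submodule.mem_top
  · intro h
    rw [pow_one] at h
    rw [← ker_eps_eq_span, RingHom.mem_ker] at h
    have hu : IsUnit (eps p m (red p m x)) := (red_isUnit p hx).map _
    rw [show ((eps p m).toRingHom : Am p m → ZMod p) (red p m x)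
      = eps p m (red p m x) from rfl] at h
    exact hu.ne_zero h

theorem main (P : ∀ n, Lam p n) (hP0 : IsUnit (P 0)) (hP1 : IsUnit (P 1))
    (a : ℤ_[p]) (ha : (p : ℤ_[p]) ∣ a)
    (hrec : ∀ n : ℕ, piMap p (n+1) (P (n+2)) = a • P (n+1) - nuMap p n (P n)) :
    ∀ n : ℕ, red p n (P n) ∈ Ideal.span {(tt p n)^(qNat p n)} ∧
      red p n (P n) ∉ Ideal.span {(tt p n)^(qNat p n + 1)} := by
  have hp1 : 1 < p := (Fact.out (p := p.Prime)).one_lt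
  set Pred : ℕ → Prop := fun n => red p n (P n) ∈ Ideal.span {(tt p n)^(qNat p n)} ∧
      red p n (P n) ∉ Ideal.span {(tt p n)^(qNat p n + 1)} with hPred
  suffices H : ∀ n, (Pred n ∧ qNat p n < p^n) ∧ (Pred (n+1) ∧ qNat p (n+1) < p^(n+1)) by
    exact fun n => (H n).1.1
  have step : ∀ n, Pred n → qNat p n < p^n → Pred (n+2) ∧ qNat p (n+2) < p^(n+2) := by
    intro n hPn hq
    set q := qNat p n with hqdef
    have hle : p^n ≤ p^(n+1) := Nat.pow_le_pow_right (by omega) (Nat.le_succ n)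
    have hle2 : p^(n+1) ≤ p^(n+2) := Nat.pow_le_pow_right (by omega) (Nat.le_succ _)
    have hc : qNat p (n+2) = (p^(n+1) - p^n) + q := rfl
    set c := qNat p (n+2) with hcdef
    have hclt : c < p^(n+1) := by omega
    -- extract data from induction hypothesis
    obtain ⟨y, hy⟩ := Ideal.mem_span_singleton.1 hPn.1
    obtain ⟨Y, hY⟩ := pibar_surjective p n y
    -- the recurrence, reduced mod p
    have hpi : pibar p (n+1) (red p (n+2) (P (n+2)))
        = -((tt p (n+1))^c * Y) := by
      have h1 := congrArg (red p (n+1)) (hrec n)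
      rw [red_piMap] at h1
      rw [red_sub, red_smul_p p ha, zero_sub] at h1
      rw [red_nuMap] at h1
      have hF : pibar p n ((tt p (n+1))^q * Y) = red p n (P n) := by
        rw [map_mul, map_pow, pibar_tt, hY, hy]
      rw [← hF, nubar_eq_mul, Sbar_eq] at h1
      rw [h1]
      congr 1
      rw [← mul_assoc, ← pow_add]
      congr 2
    -- non-membership
    have hnotmem : red p (n+2) (P (n+2)) ∉ Ideal.span {(tt p (n+2))^(c+1)} := by
      intro hmem
      obtain ⟨z, hz⟩ := Ideal.mem_span_singleton.1 hmem
      have h2 : (tt p (n+1))^c * Y ∈ Ideal.span {(tt p (n+1))^(c+1)} := by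
        rw [Ideal.mem_span_singleton]
        refine ⟨-(pibar p (n+1) z), ?_⟩
        have := congrArg (pibar p (n+1)) hz
        rw [hpi, map_mul, map_pow, pibar_tt] at this
        have := congrArg Neg.neg this
        rw [neg_neg] at this
        rw [this]
        ring
      have hYmem : Y ∈ Ideal.span {tt p (n+1)} := units_step p hclt h2
      obtain ⟨w, hw⟩ := Ideal.mem_span_singleton.1 hYmem
      have hymem : y = tt p n * pibar p n w := by
        rw [← hY, hw, map_mul, pibar_tt]
      apply hPn.2
      rw [Ideal.mem_span_singleton, hy, hymem]
      exact ⟨pibar p n w, by ring⟩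
    -- membership
    have hmem : red p (n+2) (P (n+2)) ∈ Ideal.span {(tt p (n+2))^c} := by
      obtain ⟨Z, hZ⟩ := pibar_surjective p (n+1) Y
      have hker : red p (n+2) (P (n+2)) + (tt p (n+2))^c * Z
          ∈ Ideal.span {(tt p (n+2))^(p^(n+1))} := by
        apply ker_pibar
        rw [map_add, hpi, map_mul, map_pow, pibar_tt, hZ]
        ring
      have hsub : Ideal.span {(tt p (n+2))^(p^(n+1))} ≤ Ideal.span {(tt p (n+2))^c} := by
        rw [Ideal.span_singleton_le_span_singleton]
        exact pow_dvd_pow _ (le_of_lt hclt)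
      have h3 := hsub hker
      have h4 : (tt p (n+2))^c * Z ∈ Ideal.span {(tt p (n+2))^c} :=
        Ideal.mem_span_singleton.2 (Dvd.intro _ rfl)
      have := Submodule.sub_mem _ h3 h4
      simpa using this
    exact ⟨⟨hmem, hnotmem⟩, by omega⟩
  intro n
  induction n with
  | zero =>
      refine ⟨⟨base_unit p hP0, by simp [qNat]⟩, ⟨base_unit p hP1, ?_⟩⟩
      show qNat p 1 < p^1
      simp [qNat]
      omega
  | succ k ih =>
      exact ⟨ih.2, step k ih.1.1 ih.1.2⟩

end Infra

/-- In the setting of the previous statement, `λ(P_n) = q_n`. -/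
theorem stmt17 (p : ℕ) [Fact p.Prime] (P : ∀ n, Lam p n)
    (hP0 : IsUnit (P 0)) (hP1 : IsUnit (P 1))
    (a : ℤ_[p]) (ha : (p : ℤ_[p]) ∣ a)
    (hrec : ∀ n : ℕ, piMap p (n+1) (P (n+2)) = a • P (n+1) - nuMap p n (P n))
    (hP10 : ∃ u : ℤ_[p], IsUnit u ∧ piMap p 0 (P 1) = u • P 0) :
    ∀ n : ℕ, red p n (P n) ∈ (augIdeal p n) ^ (qNat p n) ∧
      red p n (P n) ∉ (augIdeal p n) ^ (qNat p n + 1) := by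
  intro n
  have h := main p P hP0 hP1 a ha hrec n
  have hconv : ∀ k, (augIdeal p n) ^ k = Ideal.span {(tt p n)^k} := by
    intro k
    have h0 : augIdeal p n = Ideal.span {tt p n} := ker_eps_eq_span p n
    rw [h0, span_tt_pow]
  rw [hconv, hconv]
  exact h
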